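/- arXiv:1506.03779 — 10 statements merged into one kernel-verified Lean document; each statement's English description precedes it below -/
import Mathlib

section
/- Let G be a graph and let k be an integer with 1 ≤ k ≤ ⌊δ(G)/2⌋. A set M ⊆ V(G) is both a global defensive (2k)-alliance and a global offensive (2k)-alliance in G if and only if the function f with f(v) = 1 for v ∈ M and f(v) = -1 for v ∉ M is a signed total (2k)-dominating function for G. -/
open Finset

/-- Number of neighbors of `v` inside `S`. -/
def degIn {V : Type*} [Fintype V] [DecidableEq V] (G : SimpleGraph V) [DecidableRel G.Adj]
    (S : Finset V) (v : V) : ℕ := (G.neighborFinset v ∩ S).card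

/-- `M` is an open `k`-monopoly: `δ_M(v) ≥ δ(v)/2 + k` for every vertex `v`. -/
def IsKMonopoly {V : Type*} [Fintype V] [DecidableEq V] (G : SimpleGraph V) [DecidableRel G.Adj]
    (k : ℤ) (M : Finset V) : Prop :=
  M.Nonempty ∧ ∀ v : V, ((degIn G M v : ℚ)) ≥ (G.degree v : ℚ) / 2 + (k : ℚ)

/-- The open `k`-monopoly number: minimum cardinality of an open `k`-monopoly. -/
noncomputable def monopolyNumber {V : Type*} [Fintype V] [DecidableEq V] (G : SimpleGraph V)
    [DecidableRel G.Adj] (k : ℤ) : ℕ :=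
  sInf {n : ℕ | ∃ M : Finset V, IsKMonopoly G k M ∧ M.card = n}

lemma sum_eq_deg {V : Type*} [Fintype V] [DecidableEq V] (G : SimpleGraph V) [DecidableRel G.Adj]
    (M : Finset V) (v : V) :
    (∑ u ∈ G.neighborFinset v, (if u ∈ M then (1 : ℤ) else -1))
      = (degIn G M v : ℤ) - (degIn G Mᶜ v : ℤ) := by
  classical
  have h1 : G.neighborFinset v ∩ M = (G.neighborFinset v).filter (· ∈ M) := by
    rw [Finset.filter_mem_eq_inter]
  have h2 : G.neighborFinset v ∩ Mᶜ = (G.neighborFinset v).filter (¬ · ∈ M) := by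
    ext x; simp
  rw [Finset.sum_ite, Finset.sum_const, Finset.sum_const, degIn, degIn, h1, h2]
  ring

theorem stmt1 {V : Type*} [Fintype V] [DecidableEq V] (G : SimpleGraph V) [DecidableRel G.Adj]
    (k : ℤ) (hk0 : 1 ≤ k) (hk1 : (k : ℚ) ≤ ⌊(G.minDegree : ℚ) / 2⌋) (M : Finset V) :
    (∀ v : V, (degIn G M v : ℤ) ≥ (degIn G Mᶜ v : ℤ) + 2 * k) ↔
      (∀ v : V, (∑ u ∈ G.neighborFinset v, (if u ∈ M then (1 : ℤ) else -1)) ≥ 2 * k) := by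
  constructor <;> intro h v <;> have := h v <;> rw [sum_eq_deg] at * <;> omega
end

section
/- Let G be a graph and let k be an integer with 0 ≤ k ≤ δ(G). A set S ⊆ V(G) is a global powerful k-alliance in G (i.e., δ_S(v) ≥ δ_{V∖S}(v) + k for all v ∈ S and δ_S(v) ≥ δ_{V∖S}(v) + k + 2 for all v ∉ S) if and only if the function f with f(v)=1 for v∈S and f(v)=-1 otherwise is a signed (k+1)-dominating function for G, i.e., Σ_{u∈N[v]} f(u) ≥ k+1 for all v ∈ V. -/
open Finset

theorem stmt2 {V : Type*} [Fintype V] [DecidableEq V] (G : SimpleGraph V) [DecidableRel G.Adj]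
    (k : ℤ) (hk0 : 0 ≤ k) (hk1 : k ≤ (G.minDegree : ℤ)) (S : Finset V) :
    ((∀ v ∈ S, (degIn G S v : ℤ) ≥ (degIn G Sᶜ v : ℤ) + k) ∧
      (∀ v ∉ S, (degIn G S v : ℤ) ≥ (degIn G Sᶜ v : ℤ) + k + 2)) ↔
      (∀ v : V, ((if v ∈ S then (1 : ℤ) else -1) +
        ∑ u ∈ G.neighborFinset v, (if u ∈ S then (1 : ℤ) else -1)) ≥ k + 1) := by
  have hsum : ∀ v : V, ∑ u ∈ G.neighborFinset v, (if u ∈ S then (1 : ℤ) else -1)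
      = (degIn G S v : ℤ) - (degIn G Sᶜ v : ℤ) := by
    intro v
    rw [Finset.sum_ite, Finset.sum_const, Finset.sum_const]
    simp only [smul_eq_mul, mul_one, mul_neg_one, degIn]
    rw [Finset.inter_comm _ S, Finset.inter_comm _ Sᶜ,
      show S ∩ G.neighborFinset v = (G.neighborFinset v).filter (· ∈ S) by
        ext x; simp [and_comm],
      show Sᶜ ∩ G.neighborFinset v = (G.neighborFinset v).filter (fun x => ¬ x ∈ S) by
        ext x; simp [and_comm]]
    ring
  constructor
  · rintro ⟨h1, h2⟩ v
    rw [hsum]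
    by_cases hv : v ∈ S
    · have := h1 v hv; simp [hv]; linarith
    · have := h2 v hv; simp [hv]; linarith
  · intro h
    constructor
    · intro v hv
      have := h v
      rw [hsum] at this
      simp [hv] at this
      linarith
    · intro v hv
      have := h v
      rw [hsum] at this
      simp [hv] at this
      linarith
end

section
/- For any graph G of order n and any integer k with 0 ≤ k ≤ δ(G), the signed (k+1)-domination number of G equals twice the global powerful k-alliance number of G minus n, i.e., γ_s^{k+1}(G) = 2γ_k^p(G) − n (assuming G admits a global powerful k-alliance). -/
open Finset

/-- `S` is a global powerful `k`-alliance. -/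
def IsGlobalPowerfulAlliance {V : Type*} [Fintype V] [DecidableEq V] (G : SimpleGraph V)
    [DecidableRel G.Adj] (k : ℤ) (S : Finset V) : Prop :=
  S.Nonempty ∧ (∀ v ∈ S, (degIn G S v : ℤ) ≥ (degIn G Sᶜ v : ℤ) + k) ∧
    (∀ v ∉ S, (degIn G S v : ℤ) ≥ (degIn G Sᶜ v : ℤ) + k + 2)

lemma sum_ind {V : Type*} [Fintype V] [DecidableEq V] (S T : Finset V) :
    ∑ u ∈ T, (if u ∈ S then (1:ℤ) else -1) = ((T ∩ S).card : ℤ) - ((T ∩ Sᶜ).card : ℤ) := by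
  rw [← Finset.sum_filter_add_sum_filter_not T (· ∈ S)]
  have h1 : T.filter (· ∈ S) = T ∩ S := by ext u; simp [Finset.mem_filter, Finset.mem_inter]
  have h2 : T.filter (fun u => ¬ u ∈ S) = T ∩ Sᶜ := by
    ext u; simp [Finset.mem_filter, Finset.mem_inter]
  rw [Finset.sum_congr h1 (fun u hu => if_pos (Finset.mem_inter.mp hu).2),
      Finset.sum_congr h2 (fun u hu => if_neg (by simpa using (Finset.mem_inter.mp hu).2))]
  simp
  ring

theorem stmt3 {V : Type*} [Fintype V] [DecidableEq V] (G : SimpleGraph V) [DecidableRel G.Adj]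
    (k : ℤ) (hk0 : 0 ≤ k) (hk1 : k ≤ (G.minDegree : ℤ))
    (hex : ∃ S : Finset V, IsGlobalPowerfulAlliance G k S) :
    sInf {w : ℤ | ∃ f : V → ℤ, (∀ v, f v = 1 ∨ f v = -1) ∧
        (∀ v : V, f v + ∑ u ∈ G.neighborFinset v, f u ≥ k + 1) ∧ w = ∑ v, f v} =
      2 * Int.ofNat (sInf {n : ℕ | ∃ S : Finset V, IsGlobalPowerfulAlliance G k S ∧ S.card = n}) -
        (Fintype.card V : ℤ) := by
  classical
  set A : Set ℕ := {n : ℕ | ∃ S : Finset V, IsGlobalPowerfulAlliance G k S ∧ S.card = n} with hA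
  have hAne : A.Nonempty := by
    obtain ⟨S, hS⟩ := hex
    exact ⟨S.card, S, hS, rfl⟩
  set m : ℕ := sInf A with hm
  obtain ⟨S₀, hS₀, hcard₀⟩ := Nat.sInf_mem hAne
  -- indicator sum facts
  have keysum : ∀ (S : Finset V) (v : V),
      ∑ u ∈ G.neighborFinset v, (if u ∈ S then (1:ℤ) else -1)
        = (degIn G S v : ℤ) - (degIn G Sᶜ v : ℤ) := by
    intro S v
    simpa [degIn] using sum_ind S (G.neighborFinset v)
  have keytot : ∀ (S : Finset V),
      ∑ v, (if v ∈ S then (1:ℤ) else -1) = 2 * (S.card : ℤ) - (Fintype.card V : ℤ) := by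
    intro S
    have := sum_ind S (univ : Finset V)
    have hc : ((univ : Finset V) ∩ Sᶜ).card = Fintype.card V - S.card := by
      simp [Finset.card_compl]
    have hc2 : ((univ : Finset V) ∩ S) = S := by simp
    rw [hc2, hc] at this
    rw [this, Nat.cast_sub (Finset.card_le_univ S)]
    ring
  have hleast : IsLeast {w : ℤ | ∃ f : V → ℤ, (∀ v, f v = 1 ∨ f v = -1) ∧
      (∀ v : V, f v + ∑ u ∈ G.neighborFinset v, f u ≥ k + 1) ∧ w = ∑ v, f v}
      (2 * (m : ℤ) - (Fintype.card V : ℤ)) := by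
    constructor
    · refine ⟨fun v => if v ∈ S₀ then 1 else -1, fun v => by by_cases h : v ∈ S₀ <;> simp [h], ?_, ?_⟩
      · intro v
        rw [keysum S₀ v]
        by_cases hv : v ∈ S₀
        · have := hS₀.2.1 v hv
          simp only [if_pos hv]
          omega
        · have := hS₀.2.2 v hv
          simp only [if_neg hv]
          omega
      · rw [keytot S₀, hcard₀]
    · rintro w ⟨f, hf1, hf2, rfl⟩
      set S : Finset V := univ.filter (fun v => f v = 1) with hSdef
      have hfS : ∀ v, f v = if v ∈ S then 1 else -1 := by
        intro v
        rcases hf1 v with h | h <;> simp [hSdef, h]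
      have hsum : ∀ v, f v + ((degIn G S v : ℤ) - (degIn G Sᶜ v : ℤ)) ≥ k + 1 := by
        intro v
        have := hf2 v
        rwa [show (∑ u ∈ G.neighborFinset v, f u)
            = (degIn G S v : ℤ) - (degIn G Sᶜ v : ℤ) by
          rw [← keysum S v]; exact Finset.sum_congr rfl fun u _ => hfS u] at this
      have hSall : IsGlobalPowerfulAlliance G k S := by
        refine ⟨?_, ?_, ?_⟩
        · -- nonempty
          obtain ⟨v₀, _⟩ := hS₀.1
          by_cases hv : v₀ ∈ S
          · exact ⟨v₀, hv⟩
          · have h := hsum v₀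
            rw [hfS v₀, if_neg hv] at h
            have hdpos : 0 < (degIn G S v₀ : ℤ) := by omega
            have : (G.neighborFinset v₀ ∩ S).Nonempty := by
              rw [← Finset.card_pos]
              exact_mod_cast hdpos
            obtain ⟨u, hu⟩ := this
            exact ⟨u, (Finset.mem_inter.mp hu).2⟩
        · intro v hv
          have h := hsum v
          rw [hfS v, if_pos hv] at h
          omega
        · intro v hv
          have h := hsum v
          rw [hfS v, if_neg hv] at h
          omega
      have hmem : S.card ∈ A := ⟨S, hSall, rfl⟩
      have hle : m ≤ S.card := Nat.sInf_le hmem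
      have : (∑ v, f v) = 2 * (S.card : ℤ) - (Fintype.card V : ℤ) := by
        rw [← keytot S]; exact Finset.sum_congr rfl fun v _ => hfS v
      rw [this]
      have : (m : ℤ) ≤ (S.card : ℤ) := by exact_mod_cast hle
      omega
  rw [hleast.csInf_eq]
  simp [Int.ofNat_eq_natCast]
end

section
/- For any graph G of order n and size m, and every nonzero integer k with 1−⌈δ(G)/2⌉ ≤ k ≤ ⌊δ(G)/2⌋ and k > 0, every open k-monopoly M satisfies |M| ≥ ⌈(3kn − m)/(2k)⌉; in particular M_k(G) ≥ ⌈(3kn − m)/(2k)⌉. -/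
open Finset

lemma sum_degIn {V : Type*} [Fintype V] [DecidableEq V] (G : SimpleGraph V) [DecidableRel G.Adj]
    (M : Finset V) : ∑ v : V, degIn G M v = ∑ u ∈ M, G.degree u := by
  have h : ∀ v : V, degIn G M v = ∑ u ∈ M, if G.Adj v u then 1 else 0 := by
    intro v
    rw [degIn, Finset.inter_comm, ← Finset.filter_mem_eq_inter, Finset.card_filter]
    exact Finset.sum_congr rfl fun u _ => by simp [SimpleGraph.mem_neighborFinset]
  simp_rw [h]
  rw [Finset.sum_comm]
  refine Finset.sum_congr rfl fun u _ => ?_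
  rw [SimpleGraph.degree, SimpleGraph.neighborFinset_eq_filter, Finset.card_filter]
  exact Finset.sum_congr rfl fun v _ => if_congr (G.adj_comm v u) rfl rfl

lemma key_bound {V : Type*} [Fintype V] [DecidableEq V] (G : SimpleGraph V) [DecidableRel G.Adj]
    (k : ℤ) (hk0 : 0 < k) (M : Finset V) (hM : IsKMonopoly G k M) :
    ⌈((3 * k * (Fintype.card V : ℚ) - (G.edgeFinset.card : ℚ)) / (2 * k) : ℚ)⌉ ≤ (M.card : ℤ) := by
  have hk0' : (0:ℚ) < 2 * k := by positivity
  rw [Int.ceil_le]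
  push_cast
  rw [div_le_iff₀ hk0']
  -- lower bound on ∑ deg over M
  have h1 : (G.edgeFinset.card : ℚ) + k * Fintype.card V ≤ ∑ u ∈ M, (G.degree u : ℚ) := by
    have := sum_degIn G M
    calc (G.edgeFinset.card : ℚ) + k * Fintype.card V
        = ∑ v : V, ((G.degree v : ℚ) / 2 + k) := by
          rw [Finset.sum_add_distrib, ← Finset.sum_div]
          have h2 : ∑ v : V, (G.degree v : ℚ) = 2 * G.edgeFinset.card := by
            exact_mod_cast congrArg (Nat.cast : ℕ → ℚ) G.sum_degrees_eq_twice_card_edges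
          rw [h2]
          simp [Finset.card_univ]
          ring
      _ ≤ ∑ v : V, (degIn G M v : ℚ) := Finset.sum_le_sum fun v _ => hM.2 v
      _ = ∑ u ∈ M, (G.degree u : ℚ) := by exact_mod_cast congrArg (Nat.cast : ℕ → ℚ) this
  -- each vertex outside M has degree ≥ 2k; in fact every vertex does
  have hdeg : ∀ v : V, 2 * (k : ℚ) ≤ G.degree v := by
    intro v
    have h2 := hM.2 v
    have h3 : (degIn G M v : ℚ) ≤ G.degree v := by
      have : degIn G M v ≤ G.degree v := by
        rw [degIn, SimpleGraph.degree]
        exact Finset.card_le_card (Finset.inter_subset_left)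
      exact_mod_cast this
    linarith
  -- upper bound on ∑ deg over M
  have h4 : ∑ u ∈ M, (G.degree u : ℚ) ≤ 2 * G.edgeFinset.card - 2 * k * (Fintype.card V - M.card) := by
    have hsplit : ∑ u ∈ M, (G.degree u : ℚ) + ∑ u ∈ Mᶜ, (G.degree u : ℚ) = 2 * G.edgeFinset.card := by
      rw [Finset.sum_add_sum_compl]
      exact_mod_cast congrArg (Nat.cast : ℕ → ℚ) G.sum_degrees_eq_twice_card_edges
    have hout : 2 * (k:ℚ) * (Fintype.card V - M.card) ≤ ∑ u ∈ Mᶜ, (G.degree u : ℚ) := by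
      have hc : (Mᶜ.card : ℚ) = Fintype.card V - M.card := by
        rw [Finset.card_compl]
        have := Finset.card_le_univ M
        push_cast [Nat.cast_sub (by simpa [Finset.card_univ] using this)]
        simp [Finset.card_univ]
      calc 2 * (k:ℚ) * (Fintype.card V - M.card) = ∑ _u ∈ Mᶜ, 2 * (k:ℚ) := by
            rw [Finset.sum_const, nsmul_eq_mul, hc]; ring
        _ ≤ ∑ u ∈ Mᶜ, (G.degree u : ℚ) := Finset.sum_le_sum fun u _ => hdeg u
    linarith
  have hn : (M.card : ℚ) ≤ Fintype.card V := by
    exact_mod_cast (Finset.card_le_univ M).trans_eq (Finset.card_univ)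
  nlinarith [h1, h4]

theorem stmt7 {V : Type*} [Fintype V] [DecidableEq V] (G : SimpleGraph V) [DecidableRel G.Adj]
    (k : ℤ) (hk0 : 0 < k) (hk1 : k ≤ ⌊(G.minDegree : ℚ) / 2⌋) :
    (∀ M : Finset V, IsKMonopoly G k M →
        ⌈((3 * k * (Fintype.card V : ℚ) - (G.edgeFinset.card : ℚ)) / (2 * k) : ℚ)⌉ ≤ (M.card : ℤ)) ∧
      ⌈((3 * k * (Fintype.card V : ℚ) - (G.edgeFinset.card : ℚ)) / (2 * k) : ℚ)⌉ ≤
        (monopolyNumber G k : ℤ) := by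
  constructor
  · exact fun M hM => key_bound G k hk0 M hM
  · -- V is nonempty, otherwise minDegree = 0 contradicts 0 < k
    have hV : Nonempty V := by
      by_contra h
      have : IsEmpty V := not_nonempty_iff.mp h
      have hmd : G.minDegree = 0 := by
        have hu : (Finset.univ : Finset V) = ∅ := Finset.univ_eq_empty
        rw [SimpleGraph.minDegree, hu, Finset.image_empty, Finset.min_empty]
        rfl
      rw [hmd] at hk1
      norm_num at hk1
      omega
    have hkd : (k : ℚ) ≤ (G.minDegree : ℚ) / 2 := by
      exact_mod_cast Int.le_floor.mp hk1
    -- univ is a k-monopoly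
    have huniv : IsKMonopoly G k (Finset.univ : Finset V) := by
      refine ⟨Finset.univ_nonempty, fun v => ?_⟩
      have h1 : degIn G Finset.univ v = G.degree v := by
        rw [degIn, Finset.inter_univ, SimpleGraph.degree]
      rw [h1]
      have h2 : (G.minDegree : ℚ) ≤ G.degree v := by
        exact_mod_cast G.minDegree_le_degree v
      linarith
    have hne : {n : ℕ | ∃ M : Finset V, IsKMonopoly G k M ∧ M.card = n}.Nonempty :=
      ⟨Finset.univ.card, Finset.univ, huniv, rfl⟩
    obtain ⟨M, hM, hcard⟩ := Nat.sInf_mem hne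
    rw [monopolyNumber, ← hcard]
    exact key_bound G k hk0 M hM
end

section
/- For any r-regular graph G of order n and every integer k with 1−⌈r/2⌉ ≤ k ≤ ⌊r/2⌋, the open k-monopoly number satisfies M_k(G) ≥ ⌈n(2k+r)/(2r)⌉. -/
open Finset

lemma degIn_sum {V : Type*} [Fintype V] [DecidableEq V] (G : SimpleGraph V) [DecidableRel G.Adj]
    (M : Finset V) : ∑ v, degIn G M v = ∑ m ∈ M, G.degree m := by
  have h : ∀ v, degIn G M v = ∑ m ∈ M, if G.Adj v m then 1 else 0 := by
    intro v
    rw [degIn, inter_comm, ← Finset.card_filter]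
    congr 1
    ext m
    simp [SimpleGraph.mem_neighborFinset]
  simp only [h]
  rw [Finset.sum_comm]
  refine Finset.sum_congr rfl fun m _ => ?_
  rw [← Finset.card_filter]
  rw [show (univ.filter fun v => G.Adj v m) = G.neighborFinset m by
    ext v; simp [G.adj_comm]]
  rfl

theorem stmt9 {V : Type*} [Fintype V] [DecidableEq V] (G : SimpleGraph V) [DecidableRel G.Adj]
    (r : ℕ) (hr : 1 ≤ r) (hreg : G.IsRegularOfDegree r) (k : ℤ)
    (hk0 : 1 - ⌈(r : ℚ) / 2⌉ ≤ k) (hk1 : k ≤ ⌊(r : ℚ) / 2⌋) :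
    ⌈((Fintype.card V : ℚ) * (2 * k + r) / (2 * r) : ℚ)⌉ ≤ (monopolyNumber G k : ℤ) := by
  have hk1' : (k : ℚ) ≤ (r : ℚ) / 2 := le_trans (by exact_mod_cast hk1) (Int.floor_le _)
  rcases isEmpty_or_nonempty V with hV | hV
  · have h0 : Fintype.card V = 0 := Fintype.card_eq_zero
    rw [h0]
    norm_num
  · have hne : {n : ℕ | ∃ M : Finset V, IsKMonopoly G k M ∧ M.card = n}.Nonempty := by
      refine ⟨(univ : Finset V).card, univ, ⟨univ_nonempty, fun v => ?_⟩, rfl⟩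
      have hdeg : degIn G univ v = G.degree v := by
        show (G.neighborFinset v ∩ univ).card = G.degree v
        rw [inter_univ]; rfl
      rw [hdeg, hreg v]
      linarith
    obtain ⟨M, ⟨hMne, hMmon⟩, hcard⟩ := Nat.sInf_mem hne
    have hsum : (∑ v, degIn G M v : ℚ) = (r : ℚ) * M.card := by
      rw_mod_cast [degIn_sum]
      push_cast
      rw [Finset.sum_congr rfl fun m _ => by rw [hreg m]]
      simp [mul_comm]
    have hlow : (Fintype.card V : ℚ) * ((r : ℚ) / 2 + k) ≤ ∑ v, (degIn G M v : ℚ) := by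
      calc (Fintype.card V : ℚ) * ((r : ℚ) / 2 + k)
          = ∑ _v : V, ((r : ℚ) / 2 + k) := by rw [Finset.sum_const, card_univ]; ring
        _ ≤ ∑ v, (degIn G M v : ℚ) := Finset.sum_le_sum fun v _ => by
            have := hMmon v; rw [hreg v] at this; linarith
    push_cast at hlow hsum
    rw [hsum] at hlow
    rw [Int.ceil_le]
    have hmon : monopolyNumber G k = M.card := hcard.symm
    rw [hmon]
    push_cast
    rw [div_le_iff₀ (by positivity)]
    have hr' : (0:ℚ) < r := by exact_mod_cast hr
    nlinarith [hlow]
end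

section
/- Let G be a graph of order n with minimum degree δ ≥ 1. Then M_k(G) = n for some admissible integer k if and only if k = ⌊δ/2⌋ and either (i) δ is even and every vertex of G is adjacent to a vertex of degree δ or δ+1, or (ii) δ is odd and every vertex of G is adjacent to a vertex of degree δ. -/
open Finset

private lemma half_le_iff (d : ℕ) (k : ℤ) (m : ℕ) :
    ((d : ℚ) / 2 + (k : ℚ) ≤ (m : ℚ)) ↔ ((d : ℤ) + 2 * k ≤ 2 * (m : ℤ)) := by
  constructor
  · intro h
    have h2 : (d : ℚ) + 2 * (k : ℚ) ≤ 2 * (m : ℚ) := by linarith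
    exact_mod_cast h2
  · intro h
    have h2 : (d : ℚ) + 2 * (k : ℚ) ≤ 2 * (m : ℚ) := by exact_mod_cast h
    linarith

theorem stmt11 {V : Type*} [Fintype V] [DecidableEq V] (G : SimpleGraph V) [DecidableRel G.Adj]
    (hδ : 1 ≤ G.minDegree) (k : ℤ)
    (hk0 : 1 - ⌈(G.minDegree : ℚ) / 2⌉ ≤ k) (hk1 : k ≤ ⌊(G.minDegree : ℚ) / 2⌋) :
    monopolyNumber G k = Fintype.card V ↔
      (k = ⌊(G.minDegree : ℚ) / 2⌋ ∧
        ((Even G.minDegree ∧ ∀ v : V, ∃ u : V, G.Adj v u ∧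
            (G.degree u = G.minDegree ∨ G.degree u = G.minDegree + 1)) ∨
          (Odd G.minDegree ∧ ∀ v : V, ∃ u : V, G.Adj v u ∧ G.degree u = G.minDegree))) := by
  classical
  set δ := G.minDegree with hδdef
  -- V is nonempty
  haveI hne : Nonempty V := by
    by_contra h
    rw [not_nonempty_iff] at h
    have : δ = 0 := by
      simp [hδdef, SimpleGraph.minDegree, Finset.univ_eq_empty]
    omega
  -- basic bound from hk1
  have hk1' : 2 * k ≤ (δ : ℤ) := by
    have := Int.le_floor.mp hk1
    have h2 : 2 * (k : ℚ) ≤ (δ : ℚ) := by linarith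
    exact_mod_cast h2
  have hdegmin : ∀ v : V, δ ≤ G.degree v := fun v => G.minDegree_le_degree v
  -- univ is a k-monopoly
  have hU : IsKMonopoly G k (univ : Finset V) := by
    refine ⟨univ_nonempty, fun v => ?_⟩
    have : degIn G univ v = G.degree v := by
      unfold degIn
      rw [Finset.inter_univ, SimpleGraph.card_neighborFinset_eq_degree]
    rw [this, ge_iff_le, half_le_iff]
    have := hdegmin v
    omega
  -- n ≥ 2
  have hn2 : 2 ≤ Fintype.card V := by
    obtain ⟨v⟩ := hne
    have h1 : 1 ≤ G.degree v := le_trans hδ (hdegmin v)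
    rw [← SimpleGraph.card_neighborFinset_eq_degree] at h1
    obtain ⟨u, hu⟩ := Finset.card_pos.mp h1
    rw [SimpleGraph.mem_neighborFinset] at hu
    have : ({v, u} : Finset V).card ≤ Fintype.card V := by
      simpa using Finset.card_le_univ ({v, u} : Finset V)
    rwa [Finset.card_pair hu.ne] at this
  -- Step A: monopolyNumber = n ↔ every monopoly is univ
  have stepA : monopolyNumber G k = Fintype.card V ↔
      ∀ M : Finset V, IsKMonopoly G k M → M = univ := by
    unfold monopolyNumber
    constructor
    · intro h M hM
      by_contra hMne
      have hlt : M.card < Fintype.card V := by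
        have := Finset.card_lt_card (Finset.ssubset_univ_iff.mpr hMne)
        simpa using this
      have hle : sInf {n : ℕ | ∃ M : Finset V, IsKMonopoly G k M ∧ M.card = n} ≤ M.card :=
        Nat.sInf_le ⟨M, hM, rfl⟩
      omega
    · intro h
      have hmem : Fintype.card V ∈ {n : ℕ | ∃ M : Finset V, IsKMonopoly G k M ∧ M.card = n} :=
        ⟨univ, hU, Finset.card_univ⟩
      apply le_antisymm
      · exact Nat.sInf_le hmem
      · apply le_csInf ⟨Fintype.card V, hmem⟩
        rintro m ⟨M, hM, rfl⟩
        rw [h M hM, Finset.card_univ]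
    -- Step B
  have stepB : (∀ M : Finset V, IsKMonopoly G k M → M = univ) ↔
      ∀ v : V, ∃ u : V, G.Adj v u ∧ (G.degree u : ℤ) ≤ 2 * k + 1 := by
    constructor
    · intro h v
      set M : Finset V := univ.erase v with hM
      have hMneq : M ≠ univ := by
        intro heq
        have : v ∈ M := heq ▸ Finset.mem_univ v
        exact Finset.notMem_erase v univ this
      have hMion : ¬ IsKMonopoly G k M := fun hmon => hMneq (h M hmon)
      have hMnonempty : M.Nonempty := by
        rw [← Finset.card_pos, hM, Finset.card_erase_of_mem (Finset.mem_univ v),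
          Finset.card_univ]
        omega
      rw [IsKMonopoly, not_and] at hMion
      have := hMion hMnonempty
      push_neg at this
      obtain ⟨u, hu⟩ := this
      -- compute degIn G M u
      have hinter : G.neighborFinset u ∩ M = (G.neighborFinset u).erase v := by
        rw [hM, Finset.inter_erase, Finset.inter_univ]
      by_cases hvu : v ∈ G.neighborFinset u
      · have hdegIn : degIn G M u = G.degree u - 1 := by
          rw [degIn, hinter, Finset.card_erase_of_mem hvu,
            SimpleGraph.card_neighborFinset_eq_degree]
        refine ⟨u, (SimpleGraph.mem_neighborFinset _ _ _).mp hvu |>.symm, ?_⟩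
        rw [hdegIn] at hu
        have hu' : ¬ ((G.degree u : ℚ) / 2 + (k : ℚ) ≤ ((G.degree u - 1 : ℕ) : ℚ)) :=
          not_le.mpr hu
        rw [half_le_iff] at hu'
        have h1 : 1 ≤ G.degree u := le_trans hδ (hdegmin u)
        push_cast [h1] at hu'
        omega
      · exfalso
        have hdegIn : degIn G M u = G.degree u := by
          rw [degIn, hinter, Finset.erase_eq_of_notMem hvu,
            SimpleGraph.card_neighborFinset_eq_degree]
        rw [hdegIn] at hu
        rw [← not_le, half_le_iff] at hu
        have := hdegmin u
        omega
    · intro h M hM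
      by_contra hMne
      have : ∃ v : V, v ∉ M := by
        by_contra hall
        push_neg at hall
        exact hMne (Finset.eq_univ_iff_forall.mpr hall)
      obtain ⟨v, hv⟩ := this
      obtain ⟨u, huv, hdeg⟩ := h v
      have h2 := hM.2 u
      rw [ge_iff_le, half_le_iff] at h2
      have hsub : G.neighborFinset u ∩ M ⊆ (G.neighborFinset u).erase v := by
        intro x hx
        rw [Finset.mem_inter] at hx
        rw [Finset.mem_erase]
        exact ⟨fun hxv => hv (hxv ▸ hx.2), hx.1⟩
      have hvN : v ∈ G.neighborFinset u := (SimpleGraph.mem_neighborFinset _ _ _).mpr huv.symm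
      have hcard : degIn G M u ≤ G.degree u - 1 := by
        have := Finset.card_le_card hsub
        rwa [Finset.card_erase_of_mem hvN, SimpleGraph.card_neighborFinset_eq_degree] at this
      have h1 : 1 ≤ G.degree u := le_trans hδ (hdegmin u)
      omega
  rw [stepA, stepB]
  -- Step C
  constructor
  · intro h
    obtain ⟨v⟩ := hne
    obtain ⟨u, _, hdeg⟩ := h v
    have hδle : (δ : ℤ) ≤ 2 * k + 1 := le_trans (by exact_mod_cast hdegmin u) hdeg
    have hkfloor : k = ⌊(δ : ℚ) / 2⌋ := by
      refine le_antisymm hk1 ?_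
      have : ⌊(δ : ℚ) / 2⌋ < k + 1 := by
        rw [Int.floor_lt]
        push_cast
        rw [div_lt_iff₀ (by norm_num : (0:ℚ) < 2)]
        have : (δ : ℚ) ≤ 2 * k + 1 := by exact_mod_cast hδle
        linarith
      omega
    refine ⟨hkfloor, ?_⟩
    rcases Nat.even_or_odd δ with hpar | hpar
    · left
      refine ⟨hpar, fun v => ?_⟩
      obtain ⟨u, huv, hdeg⟩ := h v
      refine ⟨u, huv, ?_⟩
      have h1 := hdegmin u
      rw [Nat.even_iff] at hpar
      omega
    · right
      refine ⟨hpar, fun v => ?_⟩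
      obtain ⟨u, huv, hdeg⟩ := h v
      refine ⟨u, huv, ?_⟩
      have h1 := hdegmin u
      rw [Nat.odd_iff] at hpar
      omega
  · rintro ⟨hkfloor, hcond⟩ v
    have hδle : (δ : ℤ) ≤ 2 * k + 1 := by
      have hfl : ((δ : ℚ) / 2) < (⌊(δ : ℚ) / 2⌋ : ℚ) + 1 := Int.lt_floor_add_one _
      rw [← hkfloor] at hfl
      have : (δ : ℚ) < 2 * (k : ℚ) + 2 := by linarith
      have h2 : (δ : ℤ) < 2 * k + 2 := by exact_mod_cast this
      omega
    rcases hcond with ⟨hpar, hall⟩ | ⟨hpar, hall⟩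
    · obtain ⟨u, huv, hdeg⟩ := hall v
      refine ⟨u, huv, ?_⟩
      rw [Nat.even_iff] at hpar
      omega
    · obtain ⟨u, huv, hdeg⟩ := hall v
      refine ⟨u, huv, ?_⟩
      rw [Nat.odd_iff] at hpar
      omega
end

section
/- For the wheel graph W_{1,n−1} = K_1 + C_{n−1} (n ≥ 4), the open 1-monopoly number equals n: M_1(W_{1,n−1}) = n. -/
open Finset

attribute [local instance] Classical.propDecidable

/-- The wheel graph `W_{1,m} = K_1 + C_m`: the join of a single (hub) vertex `none`
with the cycle `C_m` on the vertices `some i`. -/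
def wheelGraph (m : ℕ) : SimpleGraph (Option (Fin m)) :=
  SimpleGraph.fromRel (fun a b =>
    a = none ∨ ∃ i j : Fin m, a = some i ∧ b = some j ∧ (SimpleGraph.cycleGraph m).Adj i j)

lemma wheel_adj_none {m : ℕ} (i : Fin m) : (wheelGraph m).Adj none (some i) := by
  simp [wheelGraph, SimpleGraph.fromRel_adj]

lemma wheel_adj_some {m : ℕ} {i j : Fin m} :
    (wheelGraph m).Adj (some i) (some j) ↔ (SimpleGraph.cycleGraph m).Adj i j := by
  simp only [wheelGraph, SimpleGraph.fromRel_adj]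
  constructor
  · rintro ⟨hne, h | h⟩
    · rcases h with h | ⟨a, b, ha, hb, hab⟩
      · exact absurd h (by simp)
      · cases ha; cases hb; exact hab
    · rcases h with h | ⟨a, b, ha, hb, hab⟩
      · exact absurd h (by simp)
      · cases ha; cases hb; exact hab.symm
  · intro h
    exact ⟨by simpa using h.ne, Or.inl (Or.inr ⟨i, j, rfl, rfl, h⟩)⟩

lemma wheel_nbhd {k : ℕ} (i : Fin (k+3)) :
    (wheelGraph (k+3)).neighborFinset (some i) = {none, some (i-1), some (i+1)} := by
  ext x
  cases x with
  | none => simp [SimpleGraph.mem_neighborFinset, ((wheelGraph (k+3)).adj_comm _ _), wheel_adj_none]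
  | some j =>
      simp only [SimpleGraph.mem_neighborFinset, wheel_adj_some, mem_insert, mem_singleton,
        Option.some.injEq]
      have : (SimpleGraph.cycleGraph (k+3)).Adj i j ↔ j ∈ ({i-1, i+1} : Set (Fin (k+3))) := by
        rw [← SimpleGraph.mem_neighborSet, SimpleGraph.cycleGraph_neighborSet]
      simp [this]

lemma cyc_ne {k : ℕ} (i : Fin (k+3)) : i - 1 ≠ i + 1 := by
  have hc : ({i - 1, i + 1} : Finset (Fin (k+3))).card = 2 := by
    rw [← SimpleGraph.cycleGraph_degree_two_le]
    exact SimpleGraph.cycleGraph_degree_three_le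
  intro h
  rw [h] at hc
  simp at hc

lemma wheel_degree_some {k : ℕ} (i : Fin (k+3)) :
    (wheelGraph (k+3)).degree (some i) = 3 := by
  rw [SimpleGraph.degree, wheel_nbhd]
  rw [card_insert_of_notMem (by simp), card_insert_of_notMem (by simp [cyc_ne i]),
    card_singleton]

lemma wheel_degree_none {k : ℕ} : 2 ≤ (wheelGraph (k+3)).degree none := by
  have hsub : ({some 0, some 1} : Finset (Option (Fin (k+3)))) ⊆
      (wheelGraph (k+3)).neighborFinset none := by
    intro x hx
    simp only [mem_insert, mem_singleton] at hx
    rcases hx with rfl | rfl <;> simp [SimpleGraph.mem_neighborFinset, wheel_adj_none]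
  have h01 : (0 : Fin (k+3)) ≠ 1 := by
    intro h; exact absurd (congrArg Fin.val h) (by simp)
  calc 2 = ({some 0, some 1} : Finset (Option (Fin (k+3)))).card := by
        rw [card_insert_of_notMem (by simp [h01]), card_singleton]
    _ ≤ _ := card_le_card hsub

theorem stmt13 (n : ℕ) (hn : 4 ≤ n) :
    monopolyNumber (wheelGraph (n - 1)) 1 = n := by
  obtain ⟨k, rfl⟩ : ∃ k, n = k + 4 := ⟨n - 4, by omega⟩
  show monopolyNumber (wheelGraph (k + 3)) 1 = k + 4
  have hcard : (univ : Finset (Option (Fin (k+3)))).card = k + 4 := by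
    simp [Fintype.card_option]
  -- univ is a monopoly
  have hdegIn_univ : ∀ v, degIn (wheelGraph (k+3)) univ v = (wheelGraph (k+3)).degree v := by
    intro v; rw [degIn, inter_univ]; rfl
  have hful : IsKMonopoly (wheelGraph (k+3)) 1 univ := by
    refine ⟨⟨none, mem_univ _⟩, fun v => ?_⟩
    rw [hdegIn_univ]
    have h2 : 2 ≤ (wheelGraph (k+3)).degree v := by
      cases v with
      | none => exact wheel_degree_none
      | some i => rw [wheel_degree_some]; omega
    have : (2 : ℚ) ≤ ((wheelGraph (k+3)).degree v : ℚ) := by exact_mod_cast h2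
    push_cast
    linarith
  -- any monopoly is univ
  have huniv : ∀ M : Finset (Option (Fin (k+3))), IsKMonopoly (wheelGraph (k+3)) 1 M →
      M = univ := by
    intro M hM
    have hsub : ∀ i : Fin (k+3),
        (wheelGraph (k+3)).neighborFinset (some i) ⊆ M := by
      intro i
      have h := hM.2 (some i)
      rw [wheel_degree_some] at h
      have h3 : 3 ≤ degIn (wheelGraph (k+3)) M (some i) := by
        by_contra hlt
        push_neg at hlt
        have : (degIn (wheelGraph (k+3)) M (some i) : ℚ) ≤ 2 := by
          exact_mod_cast Nat.lt_succ_iff.mp hlt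
        norm_num at h
        linarith
      have hle : ((wheelGraph (k+3)).neighborFinset (some i)).card ≤
          ((wheelGraph (k+3)).neighborFinset (some i) ∩ M).card := by
        have : ((wheelGraph (k+3)).neighborFinset (some i)).card = 3 := wheel_degree_some i
        rw [this]; exact h3
      have := Finset.eq_of_subset_of_card_le inter_subset_left hle
      rw [← this]
      exact inter_subset_right
    apply Finset.eq_univ_of_forall
    intro x
    cases x with
    | none =>
        have := hsub 0
        rw [wheel_nbhd] at this
        exact this (mem_insert_self _ _)
    | some j =>
        have := hsub (j - 1)
        rw [wheel_nbhd] at this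
        have hmem : some (j - 1 + 1) ∈ M := this (by simp)
        rwa [sub_add_cancel] at hmem
  have hset : {n' : ℕ | ∃ M : Finset (Option (Fin (k+3))),
      IsKMonopoly (wheelGraph (k+3)) 1 M ∧ M.card = n'} = {k + 4} := by
    ext n'
    simp only [Set.mem_setOf_eq, Set.mem_singleton_iff]
    constructor
    · rintro ⟨M, hM, rfl⟩
      rw [huniv M hM, hcard]
    · rintro rfl
      exact ⟨univ, hful, hcard⟩
  rw [monopolyNumber, hset, csInf_singleton]
end

section
/- For every complete bipartite graph K_{r,t} and every integer k with 1−⌈min(r,t)/2⌉ ≤ k ≤ ⌊min(r,t)/2⌋, the open k-monopoly number is M_k(K_{r,t}) = ⌈(r+2k)/2⌉ + ⌈(t+2k)/2⌉. -/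
open Finset

attribute [local instance] Classical.propDecidable

lemma cbg_nbhd_inl (r t : ℕ) (i : Fin r) :
    (completeBipartiteGraph (Fin r) (Fin t)).neighborFinset (Sum.inl i)
      = (univ : Finset (Fin t)).map ⟨Sum.inr, Sum.inr_injective⟩ := by
  ext x; cases x <;> simp [SimpleGraph.mem_neighborFinset]

lemma cbg_nbhd_inr (r t : ℕ) (j : Fin t) :
    (completeBipartiteGraph (Fin r) (Fin t)).neighborFinset (Sum.inr j)
      = (univ : Finset (Fin r)).map ⟨Sum.inl, Sum.inl_injective⟩ := by
  ext x; cases x <;> simp [SimpleGraph.mem_neighborFinset]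

lemma degIn_inl (r t : ℕ) (M : Finset (Fin r ⊕ Fin t)) (i : Fin r) :
    degIn (completeBipartiteGraph (Fin r) (Fin t)) M (Sum.inl i) = M.toRight.card := by
  unfold degIn
  rw [cbg_nbhd_inl]
  rw [show (univ : Finset (Fin t)).map ⟨Sum.inr, Sum.inr_injective⟩ ∩ M
      = M.toRight.map ⟨Sum.inr, Sum.inr_injective⟩ by ext x; cases x <;> simp]
  exact card_map _

lemma degIn_inr (r t : ℕ) (M : Finset (Fin r ⊕ Fin t)) (j : Fin t) :
    degIn (completeBipartiteGraph (Fin r) (Fin t)) M (Sum.inr j) = M.toLeft.card := by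
  unfold degIn
  rw [cbg_nbhd_inr]
  rw [show (univ : Finset (Fin r)).map ⟨Sum.inl, Sum.inl_injective⟩ ∩ M
      = M.toLeft.map ⟨Sum.inl, Sum.inl_injective⟩ by ext x; cases x <;> simp]
  exact card_map _

lemma deg_inl (r t : ℕ) (i : Fin r) :
    (completeBipartiteGraph (Fin r) (Fin t)).degree (Sum.inl i) = t := by
  rw [← SimpleGraph.card_neighborFinset_eq_degree, cbg_nbhd_inl, card_map, card_univ,
    Fintype.card_fin]

lemma deg_inr (r t : ℕ) (j : Fin t) :
    (completeBipartiteGraph (Fin r) (Fin t)).degree (Sum.inr j) = r := by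
  rw [← SimpleGraph.card_neighborFinset_eq_degree, cbg_nbhd_inr, card_map, card_univ,
    Fintype.card_fin]

lemma card_filter_fin_lt (n m : ℕ) (h : m ≤ n) :
    (univ.filter fun i : Fin n => (i : ℕ) < m).card = m := by
  have : (univ.filter fun i : Fin n => (i:ℕ) < m)
      = (range m).attachFin (fun x hx => lt_of_lt_of_le (mem_range.mp hx) h) := by
    ext a; simp
  rw [this, card_attachFin, card_range]

theorem stmt14 (r t : ℕ) (k : ℤ)
    (hk0 : 1 - ⌈(min r t : ℚ) / 2⌉ ≤ k) (hk1 : k ≤ ⌊(min r t : ℚ) / 2⌋) :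
    (monopolyNumber (completeBipartiteGraph (Fin r) (Fin t)) k : ℤ) =
      ⌈((r : ℚ) + 2 * k) / 2⌉ + ⌈((t : ℚ) + 2 * k) / 2⌉ := by
  set G := completeBipartiteGraph (Fin r) (Fin t) with hG
  set a : ℤ := ⌈((r : ℚ) + 2 * k) / 2⌉ with haa
  set b : ℤ := ⌈((t : ℚ) + 2 * k) / 2⌉ with hbb
  -- min r t > 0
  have hmin : 0 < min r t := by
    rcases Nat.eq_zero_or_pos (min r t) with h | h
    · rw [← Nat.cast_min, h] at hk0 hk1
      simp at hk0 hk1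
      omega
    · exact h
  have hr : 0 < r := lt_of_lt_of_le hmin (min_le_left _ _)
  have ht : 0 < t := lt_of_lt_of_le hmin (min_le_right _ _)
  have hminr : ((min r t : ℚ)) ≤ (r : ℚ) := by exact_mod_cast min_le_left r t
  have hmint : ((min r t : ℚ)) ≤ (t : ℚ) := by exact_mod_cast min_le_right r t
  -- rational bounds on k
  have hkQ1 : (k : ℚ) ≤ (min r t : ℚ) / 2 := le_trans (by exact_mod_cast hk1) (Int.floor_le _)
  have hkQ0 : -((min r t : ℚ) / 2) < (k : ℚ) := by
    have h1 : ((1 : ℤ) : ℚ) - (⌈(min r t : ℚ) / 2⌉ : ℚ) ≤ (k : ℚ) := by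
      exact_mod_cast hk0
    have h2 : (⌈(min r t : ℚ) / 2⌉ : ℚ) < (min r t : ℚ) / 2 + 1 := Int.ceil_lt_add_one _
    push_cast at h1
    linarith
  -- bounds on a and b
  have ha1 : 1 ≤ a := by
    have : (0 : ℤ) < a := by
      rw [haa, Int.lt_ceil]; push_cast; linarith
    omega
  have hb1 : 1 ≤ b := by
    have : (0 : ℤ) < b := by
      rw [hbb, Int.lt_ceil]; push_cast; linarith
    omega
  have har : a ≤ (r : ℤ) := by
    rw [haa, Int.ceil_le]
    push_cast
    linarith
  have hbt : b ≤ (t : ℤ) := by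
    rw [hbb, Int.ceil_le]
    push_cast
    linarith
  set A := a.toNat with hA
  set B := b.toNat with hB
  have hAa : (A : ℤ) = a := Int.toNat_of_nonneg (by omega)
  have hBb : (B : ℤ) = b := Int.toNat_of_nonneg (by omega)
  have hAr : A ≤ r := by omega
  have hBt : B ≤ t := by omega
  -- the key equivalences for the monopoly condition
  have hcondR : ∀ n : ℕ, ((n : ℚ) ≥ (t : ℚ) / 2 + (k : ℚ)) ↔ B ≤ n := by
    intro n
    constructor
    · intro h
      have : b ≤ (n : ℤ) := by
        rw [hbb, Int.ceil_le]; push_cast; linarith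
      omega
    · intro h
      have : (b : ℚ) ≤ (n : ℚ) := by exact_mod_cast (by omega : b ≤ (n : ℤ))
      have := Int.le_ceil (((t : ℚ) + 2 * k) / 2)
      rw [← hbb] at this
      linarith
  have hcondL : ∀ n : ℕ, ((n : ℚ) ≥ (r : ℚ) / 2 + (k : ℚ)) ↔ A ≤ n := by
    intro n
    constructor
    · intro h
      have : a ≤ (n : ℤ) := by
        rw [haa, Int.ceil_le]; push_cast; linarith
      omega
    · intro h
      have : (a : ℚ) ≤ (n : ℚ) := by exact_mod_cast (by omega : a ≤ (n : ℤ))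
      have := Int.le_ceil (((r : ℚ) + 2 * k) / 2)
      rw [← haa] at this
      linarith
  -- monopolyNumber = A + B
  have key : monopolyNumber G k = A + B := by
    have hmem : (A + B) ∈ {n : ℕ | ∃ M : Finset (Fin r ⊕ Fin t), IsKMonopoly G k M ∧ M.card = n} := by
      refine ⟨(univ.filter fun i : Fin r => (i : ℕ) < A).disjSum
        (univ.filter fun j : Fin t => (j : ℕ) < B), ?_, ?_⟩
      · constructor
        · refine card_pos.mp ?_
          rw [card_disjSum, card_filter_fin_lt r A hAr, card_filter_fin_lt t B hBt]
          omega
        · intro v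
          cases v with
          | inl i =>
            rw [hG, degIn_inl, deg_inl, toRight_disjSum, card_filter_fin_lt t B hBt]
            exact (hcondR B).mpr le_rfl
          | inr j =>
            rw [hG, degIn_inr, deg_inr, toLeft_disjSum, card_filter_fin_lt r A hAr]
            exact (hcondL A).mpr le_rfl
      · rw [card_disjSum, card_filter_fin_lt r A hAr, card_filter_fin_lt t B hBt]
    apply le_antisymm
    · exact Nat.sInf_le hmem
    · refine le_csInf ⟨_, hmem⟩ ?_
      rintro n ⟨M, ⟨hMne, hMcond⟩, rfl⟩
      have h1 := hMcond (Sum.inl ⟨0, hr⟩)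
      have h2 := hMcond (Sum.inr ⟨0, ht⟩)
      rw [hG, degIn_inl, deg_inl] at h1
      rw [hG, degIn_inr, deg_inr] at h2
      have hB' : B ≤ M.toRight.card := (hcondR _).mp h1
      have hA' : A ≤ M.toLeft.card := (hcondL _).mp h2
      have := card_toLeft_add_card_toRight (u := M)
      omega
  rw [key]
  push_cast
  omega
end

section
/- If a graph G without isolated vertices admits a partition of its vertex set into r ≥ 2 parts each of which is an open k-monopoly in G, then r ≤ 2 − 2k; in particular k ≤ 0. -/
open Finset

theorem stmt17 {V : Type*} [Fintype V] [DecidableEq V] (G : SimpleGraph V) [DecidableRel G.Adj]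
    (hniso : ∀ v : V, 0 < G.degree v) (k : ℤ)
    (hk0 : 1 - ⌈(G.minDegree : ℚ) / 2⌉ ≤ k) (hk1 : k ≤ ⌊(G.minDegree : ℚ) / 2⌋)
    (r : ℕ) (hr : 2 ≤ r) (P : Fin r → Finset V)
    (hdisj : ∀ i j : Fin r, i ≠ j → Disjoint (P i) (P j))
    (hcover : Finset.univ.biUnion P = Finset.univ)
    (hmon : ∀ i : Fin r, (P i).Nonempty ∧
      ∀ v : V, (degIn G (P i) v : ℤ) ≥ (degIn G (P i)ᶜ v : ℤ) + 2 * k) :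
    (r : ℤ) ≤ 2 - 2 * k ∧ k ≤ 0 := by

  have i0 : Fin r := ⟨0, by omega⟩
  obtain ⟨v0, hv0⟩ := (hmon i0).1
  have hne : Nonempty V := ⟨v0⟩
  obtain ⟨v, hv⟩ := G.exists_minimal_degree_vertex
  set m : ℤ := ⌈(G.minDegree : ℚ) / 2⌉ with hm
  have hm1 : (G.minDegree : ℤ) ≤ 2 * m := by
    have h := Int.le_ceil ((G.minDegree : ℚ) / 2)
    have : (G.minDegree : ℚ) ≤ 2 * (m : ℚ) := by
      rw [hm]; push_cast; linarith
    exact_mod_cast this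
  have hm2 : 2 * m ≤ (G.minDegree : ℤ) + 1 := by
    have h := Int.ceil_lt_add_one ((G.minDegree : ℚ) / 2)
    have : 2 * (m : ℚ) < (G.minDegree : ℚ) + 2 := by
      rw [hm]; push_cast; linarith
    have := (by exact_mod_cast this : 2 * m < (G.minDegree : ℤ) + 2)
    omega
  -- split of degree along S, Sᶜ
  have hsplit : ∀ S : Finset V, degIn G S v + degIn G Sᶜ v = G.degree v := by
    intro S
    unfold degIn
    rw [← Finset.card_union_of_disjoint]
    · congr 1
      ext x
      simp only [Finset.mem_union, Finset.mem_inter, Finset.mem_compl,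
        SimpleGraph.mem_neighborFinset]
      tauto
    · exact Finset.disjoint_left.mpr (by
        intro x hx hx'
        exact (Finset.mem_compl.mp (Finset.mem_inter.mp hx').2) (Finset.mem_inter.mp hx).2)
  have hsum : ∑ i, degIn G (P i) v = G.degree v := by
    unfold degIn
    rw [← Finset.card_biUnion]
    · congr 1
      ext x
      simp only [Finset.mem_biUnion, Finset.mem_inter, SimpleGraph.mem_neighborFinset,
        Finset.mem_univ, true_and]
      constructor
      · rintro ⟨i, h, _⟩; exact h
      · intro h
        have hx : x ∈ Finset.univ.biUnion P := by rw [hcover]; exact Finset.mem_univ x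
        obtain ⟨i, _, hi⟩ := Finset.mem_biUnion.mp hx
        exact ⟨i, h, hi⟩
    · intro i _ j _ hij
      exact Disjoint.mono Finset.inter_subset_right Finset.inter_subset_right (hdisj i j hij)
  -- each part has many neighbors of v
  have hpart : ∀ i : Fin r, m + k ≤ (degIn G (P i) v : ℤ) := by
    intro i
    have h1 := (hmon i).2 v
    have h2 := hsplit (P i)
    have h2' : (degIn G (P i) v : ℤ) + (degIn G (P i)ᶜ v : ℤ) = (G.degree v : ℤ) := by
      exact_mod_cast h2
    rw [← hv] at h2'
    omega
  have hc1 : 1 ≤ m + k := by omega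
  have hsum' : (G.minDegree : ℤ) = ∑ i, (degIn G (P i) v : ℤ) := by
    rw [hv]; exact_mod_cast hsum.symm
  have hlow : (r : ℤ) * (m + k) ≤ (G.minDegree : ℤ) := by
    rw [hsum']
    calc (r : ℤ) * (m + k) = ∑ _i : Fin r, (m + k) := by
          rw [Finset.sum_const, Finset.card_univ, Fintype.card_fin]; ring
      _ ≤ ∑ i, (degIn G (P i) v : ℤ) := Finset.sum_le_sum (fun i _ => hpart i)
  have hr2 : (2 : ℤ) ≤ (r : ℤ) := by exact_mod_cast hr
  have hkey : ((r : ℤ) - 2) * (m + k) ≤ -2 * k := by nlinarith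
  have hk0' : k ≤ 0 := by nlinarith
  constructor
  · have h2 : (r : ℤ) - 2 ≤ ((r : ℤ) - 2) * (m + k) :=
      le_mul_of_one_le_right (by linarith) hc1
    linarith
  · exact hk0'
end

section
/- Let G be a graph whose vertex set admits a partition {X, Y} into two open 0-monopolies. Then for every vertex v of G, δ_X(v) = δ_Y(v), the degree of every vertex is even, and the number of edges of the subgraph induced by X equals the number of edges of the subgraph induced by Y. -/
open Finset

lemma degIn_eq_sum {V : Type*} [Fintype V] [DecidableEq V] (G : SimpleGraph V)
    [DecidableRel G.Adj] (S : Finset V) (v : V) :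
    degIn G S v = ∑ w ∈ S, if G.Adj v w then 1 else 0 := by
  have : G.neighborFinset v ∩ S = S.filter (G.Adj v) := by
    ext w; simp [SimpleGraph.mem_neighborFinset, and_comm]
  rw [degIn, this, Finset.card_filter]

lemma twice_card_induce {V : Type*} [Fintype V] [DecidableEq V] (G : SimpleGraph V)
    [DecidableRel G.Adj] (S : Finset V) :
    2 * (G.induce (S : Set V)).edgeFinset.card = ∑ v ∈ S, degIn G S v := by
  have h := SimpleGraph.sum_degrees_eq_twice_card_edges (G.induce (S : Set V))
  rw [← h]
  have hdeg : ∀ u : (S : Set V), (G.induce (S : Set V)).degree u = degIn G S ↑u := by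
    intro u
    rw [SimpleGraph.degree, degIn]
    refine Finset.card_bij (fun w _ => (w : V)) ?_ ?_ ?_
    · intro w hw
      simp only [SimpleGraph.mem_neighborFinset] at hw
      simp only [Finset.mem_inter, SimpleGraph.mem_neighborFinset]
      exact ⟨hw, w.2⟩
    · intro a _ b _ hab
      exact Subtype.ext hab
    · intro b hb
      simp only [Finset.mem_inter, SimpleGraph.mem_neighborFinset] at hb
      exact ⟨⟨b, hb.2⟩, by simpa using hb.1, rfl⟩
  rw [Finset.sum_congr rfl (fun u _ => hdeg u)]
  exact Finset.sum_finset_coe (degIn G S) S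

theorem stmt18 {V : Type*} [Fintype V] [DecidableEq V] (G : SimpleGraph V) [DecidableRel G.Adj]
    (X Y : Finset V) (hdisj : Disjoint X Y) (hcover : X ∪ Y = Finset.univ)
    (hX : X.Nonempty ∧ ∀ v : V, (degIn G X v : ℤ) ≥ (degIn G Xᶜ v : ℤ))
    (hY : Y.Nonempty ∧ ∀ v : V, (degIn G Y v : ℤ) ≥ (degIn G Yᶜ v : ℤ)) :
    (∀ v : V, degIn G X v = degIn G Y v) ∧ (∀ v : V, Even (G.degree v)) ∧
      (G.induce (X : Set V)).edgeFinset.card = (G.induce (Y : Set V)).edgeFinset.card := by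
  have hYX : Y = Xᶜ := by
    ext v
    have hv : v ∈ X ∪ Y := hcover ▸ Finset.mem_univ v
    rw [Finset.mem_union] at hv
    simp only [Finset.mem_compl]
    constructor
    · intro hvY hvX
      exact (Finset.disjoint_left.mp hdisj hvX) hvY
    · intro hvX
      exact hv.resolve_left hvX
  have hXY : X = Yᶜ := by rw [hYX, compl_compl]
  have heq : ∀ v : V, degIn G X v = degIn G Y v := by
    intro v
    have h1 := hX.2 v
    have h2 := hY.2 v
    rw [← hYX] at h1
    rw [← hXY] at h2
    omega
  refine ⟨heq, ?_, ?_⟩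
  · intro v
    have hsplit : G.degree v = degIn G X v + degIn G Y v := by
      rw [SimpleGraph.degree, degIn, degIn, ← Finset.card_union_of_disjoint
        (Finset.disjoint_of_subset_left Finset.inter_subset_right
          (Finset.disjoint_of_subset_right Finset.inter_subset_right hdisj)),
        ← Finset.inter_union_distrib_left, hcover, Finset.inter_univ]
    rw [hsplit, ← heq v]
    exact Even.add_self _
  · have key : ∑ v ∈ X, degIn G X v = ∑ v ∈ Y, degIn G Y v := by
      calc ∑ v ∈ X, degIn G X v = ∑ v ∈ X, degIn G Y v := by
            exact Finset.sum_congr rfl (fun v _ => heq v)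
        _ = ∑ v ∈ Y, degIn G X v := by
            simp only [degIn_eq_sum]
            rw [Finset.sum_comm]
            refine Finset.sum_congr rfl (fun w _ => Finset.sum_congr rfl (fun v _ => ?_))
            simp [G.adj_comm]
        _ = ∑ v ∈ Y, degIn G Y v := Finset.sum_congr rfl (fun v _ => heq v)
    have h1 := twice_card_induce G X
    have h2 := twice_card_induce G Y
    omega
end
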